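/- Let S be a finite extension of ℚ_3 with normalized valuation v in which −1 is not a square, and suppose x, y, z, w in the valuation ring satisfy w² = −6x⁴ − 3y⁴ + 2z⁴ with min(v(x), v(y), v(z), v(w)) = 0. Then v(z) > 0 and v(w) > 0. -/

import Mathlib

open Multiplicative WithZero Polynomial

/-- Square roots of `1`-units in `ℤ_[3]`, by Hensel's lemma. -/
lemma aux12_sq_lift (c : ℤ_[3]) (hc : ‖c - 1‖ < 1) :
    ∃ d : ℤ_[3], ‖d - 1‖ < 1 ∧ d ^ 2 = c := by
  set F : Polynomial ℤ_[3] := X ^ 2 - C c with hF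
  have heval1 : F.eval 1 = 1 - c := by simp [hF]
  have hdeval : F.derivative.eval 1 = 2 := by simp [hF]; norm_num
  have h2 : ‖(2 : ℤ_[3])‖ = 1 := by
    refine le_antisymm (PadicInt.norm_le_one _) ?_
    by_contra hlt
    rw [not_le] at hlt
    have hdvd : ((3 : ℕ) : ℤ_[3]) ∣ 2 := (PadicInt.norm_lt_one_iff_dvd _).mp hlt
    obtain ⟨k, hk⟩ := hdvd
    have h30 : (PadicInt.toZMod ((3 : ℕ) : ℤ_[3]) : ZMod 3) = 0 := by
      rw [map_natCast]; decide
    have := congrArg (PadicInt.toZMod) hk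
    rw [map_mul, h30, zero_mul] at this
    have h20 : (PadicInt.toZMod (2 : ℤ_[3]) : ZMod 3) = 2 := by
      rw [show (2 : ℤ_[3]) = ((2 : ℕ) : ℤ_[3]) by norm_num, map_natCast]
      norm_num
    rw [h20] at this
    exact absurd this (by decide)
  have hcond : ‖F.eval 1‖ < ‖F.derivative.eval 1‖ ^ 2 := by
    rw [heval1, hdeval, h2, one_pow, norm_sub_rev]
    exact hc
  obtain ⟨z, hz0, hz1, -, -⟩ := hensels_lemma hcond
  refine ⟨z, ?_, ?_⟩
  · rwa [Polynomial.coe_aeval_eq_eval, hdeval, h2] at hz1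
  · have : z ^ 2 - c = 0 := by simpa [hF] using hz0
    exact sub_eq_zero.mp this

lemma aux12_pow_lift (n : ℕ) (c : ℤ_[3]) (hc : ‖c - 1‖ < 1) :
    ∃ d : ℤ_[3], ‖d - 1‖ < 1 ∧ d ^ (2 ^ n) = c := by
  induction n generalizing c with
  | zero => exact ⟨c, hc, by simpa using rfl⟩
  | succ n ih =>
      obtain ⟨d, hd, hdc⟩ := ih c hc
      obtain ⟨e, he, hed⟩ := aux12_sq_lift d hd
      refine ⟨e, he, ?_⟩
      rw [pow_succ, mul_comm (2 ^ n) 2, pow_mul, hed, hdc]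

lemma aux12_toZMod_zero_iff (x : ℤ_[3]) : ‖x‖ < 1 ↔ PadicInt.toZMod x = 0 := by
  rw [PadicInt.norm_lt_one_iff_dvd, ← Ideal.mem_span_singleton,
    ← PadicInt.maximalIdeal_eq_span_p, ← PadicInt.ker_toZMod, RingHom.mem_ker]

section S

variable {S : Type*} [Field S] [Algebra ℚ_[3] S]
  (v : Valuation S (WithZero (Multiplicative ℤ)))

/-- the valuation of the image of a `3`-adic unit is `1`. -/
lemma aux12_val_unit {u : ℚ_[3]} (hu : ‖u‖ = 1) :
    v (algebraMap ℚ_[3] S u) = 1 := by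
  have hinj : Function.Injective (algebraMap ℚ_[3] S) := (algebraMap ℚ_[3] S).injective
  have hu0 : u ≠ 0 := by
    intro h; rw [h, norm_zero] at hu; norm_num at hu
  set U : ℤ_[3] := ⟨u, hu.le⟩ with hUdef
  have hUu : (U : ℚ_[3]) = u := rfl
  have hUnorm : ‖U‖ = 1 := by
    rw [PadicInt.norm_def, hUu, hu]
  -- U² is a 1-unit
  have hU2 : ‖U ^ 2 - 1‖ < 1 := by
    have hfac : U ^ 2 - 1 = (U - 1) * (U + 1) := by ring
    have hr : ∀ r : ZMod 3, r = 0 ∨ r - 1 = 0 ∨ r + 1 = 0 := by decide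
    rcases hr (PadicInt.toZMod U) with h0 | h1 | h2
    · exfalso
      have := (aux12_toZMod_zero_iff U).mpr h0
      rw [hUnorm] at this; norm_num at this
    · have h1' : ‖U - 1‖ < 1 := by
        rw [aux12_toZMod_zero_iff]; rw [map_sub, map_one]; exact h1
      calc ‖U ^ 2 - 1‖ = ‖U - 1‖ * ‖U + 1‖ := by rw [hfac, norm_mul]
        _ ≤ ‖U - 1‖ * 1 := by
            exact mul_le_mul_of_nonneg_left (PadicInt.norm_le_one _) (norm_nonneg _)
        _ < 1 := by rwa [mul_one]
    · have h2' : ‖U + 1‖ < 1 := by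
        rw [aux12_toZMod_zero_iff]; rw [map_add, map_one]; exact h2
      calc ‖U ^ 2 - 1‖ = ‖U - 1‖ * ‖U + 1‖ := by rw [hfac, norm_mul]
        _ ≤ 1 * ‖U + 1‖ := by
            exact mul_le_mul_of_nonneg_right (PadicInt.norm_le_one _) (norm_nonneg _)
        _ < 1 := by rwa [one_mul]
  -- valuation nonvanishing
  have hAu0 : algebraMap ℚ_[3] S u ≠ 0 := by
    intro h
    exact hu0 (hinj (by rw [h, map_zero]))
  have hx : v (algebraMap ℚ_[3] S u) ≠ 0 := v.ne_zero_iff.mpr hAu0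
  set k : ℤ := (WithZero.unzero hx).toAdd with hk
  -- divisibility
  have hdvd : ∀ n : ℕ, (2 : ℤ) ^ n ∣ 2 * k := by
    intro n
    obtain ⟨d, hd, hdc⟩ := aux12_pow_lift n (U ^ 2) hU2
    have hd0 : (d : ℚ_[3]) ≠ 0 := by
      intro h
      have : ((d : ℚ_[3])) ^ (2 ^ n) = u ^ 2 := by
        have := congrArg (fun t : ℤ_[3] => (t : ℚ_[3])) hdc
        push_cast at this
        simpa [hUu] using this
      rw [h, zero_pow (by positivity)] at this
      exact pow_ne_zero 2 hu0 this.symm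
    have hcast : ((d : ℚ_[3])) ^ (2 ^ n) = u ^ 2 := by
      have := congrArg (fun t : ℤ_[3] => (t : ℚ_[3])) hdc
      push_cast at this
      simpa [hUu] using this
    have hAd0 : algebraMap ℚ_[3] S (d : ℚ_[3]) ≠ 0 := by
      intro h; exact hd0 (hinj (by rw [h, map_zero]))
    have hy : v (algebraMap ℚ_[3] S (d : ℚ_[3])) ≠ 0 := v.ne_zero_iff.mpr hAd0
    have hveq : v (algebraMap ℚ_[3] S (d : ℚ_[3])) ^ (2 ^ n)
        = v (algebraMap ℚ_[3] S u) ^ 2 := by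
      rw [← map_pow, ← map_pow, ← map_pow, ← map_pow, hcast]
    have hgrp : (WithZero.unzero hy) ^ (2 ^ n) = (WithZero.unzero hx) ^ 2 := by
      have : ((WithZero.unzero hy : Multiplicative ℤ) : WithZero (Multiplicative ℤ)) ^ (2 ^ n)
          = ((WithZero.unzero hx : Multiplicative ℤ) : WithZero (Multiplicative ℤ)) ^ 2 := by
        rw [WithZero.coe_unzero, WithZero.coe_unzero]; exact hveq
      rw [← WithZero.coe_pow, ← WithZero.coe_pow] at this
      exact WithZero.coe_inj.mp this
    have hadd := congrArg Multiplicative.toAdd hgrp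
    rw [toAdd_pow, toAdd_pow, nsmul_eq_mul, nsmul_eq_mul] at hadd
    refine ⟨(WithZero.unzero hy).toAdd, ?_⟩
    rw [← hk] at hadd
    push_cast at hadd ⊢
    linarith [hadd]
  -- conclude k = 0
  have hk0 : k = 0 := by
    by_contra hkne
    have h2k : 2 * k ≠ 0 := by omega
    set m : ℕ := (2 * k).natAbs with hm
    have hmpos : (0 : ℤ) < |2 * k| := abs_pos.mpr h2k
    have hle : (2 : ℤ) ^ m ≤ |2 * k| := Int.le_of_dvd hmpos ((dvd_abs _ _).mpr (hdvd m))
    have hlt : |2 * k| < (2 : ℤ) ^ m := by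
      rw [hm]
      have := Nat.lt_two_pow_self (n := (2 * k).natAbs)
      calc |2 * k| = ((2 * k).natAbs : ℤ) := (Int.abs_eq_natAbs _)
        _ < ((2 ^ (2 * k).natAbs : ℕ) : ℤ) := by exact_mod_cast this
        _ = (2 : ℤ) ^ (2 * k).natAbs := by push_cast; ring
    omega
  have : WithZero.unzero hx = 1 := by
    rw [← toAdd_eq_zero, ← hk, hk0]
  rw [← WithZero.coe_unzero hx, this, WithZero.coe_one]

/-- valuation of the image of any nonzero `3`-adic number. -/
lemma aux12_val_eq (a : ℚ_[3]) (ha : a ≠ 0) :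
    v (algebraMap ℚ_[3] S a) = v (3 : S) ^ a.valuation := by
  set u : ℚ_[3] := a * (3 : ℚ_[3]) ^ (-a.valuation) with hu
  have h3Q : ((3 : ℕ) : ℚ_[3]) = (3 : ℚ_[3]) := by norm_num
  have h3ne : (3 : ℚ_[3]) ≠ 0 := by norm_num
  have hnu : ‖u‖ = 1 := by
    rw [hu, norm_mul, norm_zpow, Padic.norm_eq_zpow_neg_valuation ha, ← h3Q, Padic.norm_p]
    rw [inv_zpow, mul_inv_cancel₀ (zpow_ne_zero _ (by norm_num))]
  have hau : a = u * (3 : ℚ_[3]) ^ (a.valuation) := by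
    rw [hu, mul_assoc, ← zpow_add₀ h3ne, neg_add_cancel, zpow_zero, mul_one]
  have h3S : algebraMap ℚ_[3] S (3 : ℚ_[3]) = (3 : S) := by
    rw [map_ofNat]
  calc v (algebraMap ℚ_[3] S a)
      = v (algebraMap ℚ_[3] S u * algebraMap ℚ_[3] S ((3 : ℚ_[3]) ^ (a.valuation))) := by
        rw [← map_mul, ← hau]
    _ = v (3 : S) ^ a.valuation := by
        rw [map_mul, map_zpow₀, h3S, aux12_val_unit v hnu, one_mul, map_zpow₀]

/-- `v 2 = 1`. -/
lemma aux12_val_two (h3 : v (3 : S) < 1) : v (2 : S) = 1 := by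
  have h2le : v (2 : S) ≤ 1 := by
    have h12 : (2 : S) = 1 + 1 := by norm_num
    calc v (2 : S) ≤ max (v (1 : S)) (v (1 : S)) := by rw [h12]; exact v.map_add 1 1
      _ = 1 := by simp
  rcases lt_or_eq_of_le h2le with hlt | heq
  · exfalso
    have h1lt : v (2 : S) < v (1 : S) := by rwa [map_one]
    have : v ((1 : S) + 2) = v (1 : S) := Valuation.map_add_eq_of_lt_left v h1lt
    rw [map_one] at this
    have h123 : (1 : S) + 2 = 3 := by norm_num
    rw [h123] at this
    exact absurd h3 (by rw [this]; exact lt_irrefl 1)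
  · exact heq

end S

set_option synthInstance.maxHeartbeats 1000000 in
set_option maxHeartbeats 2000000 in
/-- Key lemma: an approximate square root of `-1` yields an exact one. -/
theorem aux12_key {S : Type*} [Field S] [Algebra ℚ_[3] S] [FiniteDimensional ℚ_[3] S]
    (v : Valuation S (WithZero (Multiplicative ℤ))) (h3 : v (3 : S) < 1)
    (s : S) (hs : v s ≤ 1) (hs1 : v (s ^ 2 + 1) < 1) : ∃ t : S, t ^ 2 = -1 := by
  classical
  by_cases hδ0 : s ^ 2 + 1 = 0
  · exact ⟨s, by linear_combination hδ0⟩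
  haveI : CharZero S := charZero_of_injective_algebraMap (algebraMap ℚ_[3] S).injective
  have h30 : (3 : S) ≠ 0 := by norm_num
  have h3ne : v (3 : S) ≠ 0 := v.ne_zero_iff.mpr h30
  have hv2 : v (2 : S) = 1 := aux12_val_two v h3
  -- numeric setup for the rank-one structure
  set k3 : ℤ := (WithZero.unzero h3ne).toAdd with hk3
  have hk3neg : k3 < 0 := by
    have : (WithZero.unzero h3ne) < (1 : Multiplicative ℤ) := by
      rw [← WithZero.coe_lt_coe, WithZero.coe_unzero, WithZero.coe_one]
      exact h3
    rw [← Multiplicative.toAdd_lt] at this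
    exact this.trans_eq toAdd_one
  set e : ℤ := -k3 with he
  have hepos : (0 : ℝ) < (e : ℝ) := by
    have h' : (0 : ℤ) < e := by omega
    exact_mod_cast h'
  set b : NNReal := (3 : NNReal) ^ ((e : ℝ)⁻¹) with hb
  have hb1 : 1 < b := NNReal.one_lt_rpow (by norm_num) (by positivity)
  have hb0 : (b : NNReal) ≠ 0 := ne_zero_of_lt hb1
  -- instances
  letI : Valued S (WithZero (Multiplicative ℤ)) := Valued.mk' v
  have hVv : (Valued.v : Valuation S (WithZero (Multiplicative ℤ))) = v := rfl
  letI : Valuation.RankOne (Valued.v : Valuation S (WithZero (Multiplicative ℤ))) :=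
    { hom' := (WithZeroMulInt.toNNReal hb0).comp MonoidWithZeroHom.ValueGroup₀.embedding
      strictMono' := (WithZeroMulInt.toNNReal_strictMono hb1).comp
        MonoidWithZeroHom.ValueGroup₀.embedding_strictMono
      exists_val_nontrivial := ⟨3, by rw [hVv]; exact ⟨h3ne, ne_of_lt h3⟩⟩ }
  letI : NormedField S := Valued.toNormedField S (WithZero (Multiplicative ℤ))
  have hnorm : ∀ g : S, ‖g‖ = ((WithZeroMulInt.toNNReal hb0 (v g) : NNReal) : ℝ) := fun g => by
    show ((WithZeroMulInt.toNNReal hb0 (MonoidWithZeroHom.ValueGroup₀.embedding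
      ((Valued.v : Valuation S (WithZero (Multiplicative ℤ))).restrict g)) : NNReal) : ℝ) = _
    rw [Valuation.embedding_restrict]; rfl
  -- the norm extends the 3-adic norm
  have hb3 : WithZeroMulInt.toNNReal hb0 (v (3:S)) = b ^ k3 := by
    rw [WithZeroMulInt.toNNReal_neg_apply hb0 h3ne, ← hk3]
  have hnormA : ∀ a : ℚ_[3], ‖algebraMap ℚ_[3] S a‖ = ‖a‖ := by
    intro a
    by_cases ha : a = 0
    · rw [ha, map_zero, norm_zero, norm_zero]
    rw [hnorm, aux12_val_eq v a ha, map_zpow₀, hb3, ← zpow_mul]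
    rw [Padic.norm_eq_zpow_neg_valuation ha]
    have hcast : ((b ^ (k3 * a.valuation) : NNReal) : ℝ)
        = (3 : ℝ) ^ ((e : ℝ)⁻¹ * ((k3 * a.valuation : ℤ) : ℝ)) := by
      rw [NNReal.coe_zpow, hb, NNReal.coe_rpow, NNReal.coe_ofNat,
        ← Real.rpow_intCast ((3 : ℝ) ^ ((e : ℝ)⁻¹)) (k3 * a.valuation),
        ← Real.rpow_mul (by norm_num)]
    rw [hcast]
    have he0 : (e : ℝ) ≠ 0 := ne_of_gt hepos
    have hexp : (e : ℝ)⁻¹ * ((k3 * a.valuation : ℤ) : ℝ) = ((-a.valuation : ℤ) : ℝ) := by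
      rw [show k3 = -e by omega]
      push_cast
      field_simp
    rw [hexp, Real.rpow_intCast]
    push_cast
    norm_num
  letI : NormedSpace ℚ_[3] S :=
    { norm_smul_le := fun a x => by
        rw [Algebra.smul_def, norm_mul, hnormA] }
  haveI : CompleteSpace S := FiniteDimensional.complete ℚ_[3] S
  -- Newton iteration
  set δ := v (s ^ 2 + 1) with hδ
  have hδ1 : δ < 1 := hs1
  have hδne : δ ≠ 0 := by rw [hδ]; exact v.ne_zero_iff.mpr hδ0
  set T : ℕ → S := fun n => Nat.rec s (fun _ t => t - (t ^ 2 + 1) / (2 * t)) n with hT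
  have hT0 : T 0 = s := rfl
  have hTs : ∀ n, T (n + 1) = T n - ((T n) ^ 2 + 1) / (2 * T n) := fun n => rfl
  have hinv : ∀ n, v (T n) = 1 ∧ v ((T n) ^ 2 + 1) ≤ δ ^ (n + 1) := by
    intro n
    induction n with
    | zero =>
        constructor
        · have hsq : v (s ^ 2) = 1 := by
            have heq2 : s ^ 2 = (s ^ 2 + 1) + (-1) := by ring
            have hlt : v (s ^ 2 + 1) < v (-1 : S) := by
              rw [Valuation.map_neg, map_one]; exact hs1
            rw [heq2, Valuation.map_add_eq_of_lt_right v hlt, Valuation.map_neg, map_one]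
          have h2 : (v s) ^ 2 = 1 := by rw [← map_pow]; exact hsq
          have hle2 : (v s) ^ 2 ≤ v s := by
            calc (v s) ^ 2 = v s * v s := sq (v s)
              _ ≤ v s * 1 := mul_le_mul_right hs _
              _ = v s := mul_one _
          exact le_antisymm hs (by rw [← h2]; exact hle2)
        · rw [hT0, pow_one, ← hδ]
    | succ n ih =>
        obtain ⟨h1, h2⟩ := ih
        have htn0 : T n ≠ 0 := by
          intro h; rw [h, map_zero] at h1; exact zero_ne_one h1
        have h2t0 : (2 : S) * T n ≠ 0 := mul_ne_zero two_ne_zero htn0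
        have hq : v (((T n) ^ 2 + 1) / (2 * T n)) = v ((T n) ^ 2 + 1) := by
          rw [map_div₀, map_mul, hv2, h1, one_mul, div_one]
        have hδn1 : δ ^ (n + 1) < 1 := by
          calc δ ^ (n + 1) = δ * δ ^ n := by rw [pow_succ, mul_comm]
            _ ≤ δ * 1 := mul_le_mul_right (pow_le_one' hδ1.le n) _
            _ = δ := mul_one _
            _ < 1 := hδ1
        have hqlt : v (((T n) ^ 2 + 1) / (2 * T n)) < 1 := by
          rw [hq]; exact lt_of_le_of_lt h2 hδn1
        constructor
        · rw [hTs n, sub_eq_add_neg]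
          have : v (-(((T n) ^ 2 + 1) / (2 * T n))) < v (T n) := by
            rw [Valuation.map_neg, h1]; exact hqlt
          rw [Valuation.map_add_eq_of_lt_left v this]; exact h1
        · have heqq : (T (n + 1)) ^ 2 + 1 = (((T n) ^ 2 + 1) / (2 * T n)) ^ 2 := by
            rw [hTs n]; field_simp; ring
          rw [heqq, map_pow, hq]
          calc (v ((T n) ^ 2 + 1)) ^ 2 ≤ (δ ^ (n + 1)) ^ 2 := pow_le_pow_left' h2 2
            _ = δ ^ (n + 2) * δ ^ n := by rw [← pow_mul, ← pow_add]; ring_nf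
            _ ≤ δ ^ (n + 2) * 1 := mul_le_mul_right (pow_le_one' hδ1.le n) _
            _ = δ ^ (n + 2) := mul_one _
  -- norm bounds
  set r : ℝ := ((WithZeroMulInt.toNNReal hb0 δ : NNReal) : ℝ) with hr
  have hr0 : 0 ≤ r := (WithZeroMulInt.toNNReal hb0 δ).coe_nonneg
  have hr1 : r < 1 := by
    rw [hr]
    exact_mod_cast (WithZeroMulInt.toNNReal_lt_one_iff hb1).mpr hδ1
  have hbound : ∀ n, ‖(T n) ^ 2 + 1‖ ≤ r ^ (n + 1) := by
    intro n
    rw [hnorm]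
    have hle : WithZeroMulInt.toNNReal hb0 (v ((T n) ^ 2 + 1))
        ≤ (WithZeroMulInt.toNNReal hb0 δ) ^ (n + 1) := by
      rw [← map_pow]
      exact (WithZeroMulInt.toNNReal_strictMono hb1).monotone (hinv n).2
    calc ((WithZeroMulInt.toNNReal hb0 (v ((T n) ^ 2 + 1)) : NNReal) : ℝ)
        ≤ (((WithZeroMulInt.toNNReal hb0 δ) ^ (n + 1) : NNReal) : ℝ) := by exact_mod_cast hle
      _ = r ^ (n + 1) := by rw [hr]; push_cast; ring
  have hdist : ∀ n, dist (T n) (T (n + 1)) ≤ r * r ^ n := by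
    intro n
    have hTT : T n - T (n + 1) = ((T n) ^ 2 + 1) / (2 * T n) := by
      rw [hTs n]; ring
    have h1 := (hinv n).1
    have htn0 : T n ≠ 0 := by
      intro h; rw [h, map_zero] at h1; exact zero_ne_one h1
    have hq : v (((T n) ^ 2 + 1) / (2 * T n)) = v ((T n) ^ 2 + 1) := by
      rw [map_div₀, map_mul, hv2, h1, one_mul, div_one]
    calc dist (T n) (T (n + 1)) = ‖T n - T (n + 1)‖ := dist_eq_norm _ _
      _ = ‖((T n) ^ 2 + 1) / (2 * T n)‖ := by rw [hTT]
      _ = ((WithZeroMulInt.toNNReal hb0 (v (((T n) ^ 2 + 1) / (2 * T n))) : NNReal) : ℝ) :=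
          hnorm _
      _ = ((WithZeroMulInt.toNNReal hb0 (v ((T n) ^ 2 + 1)) : NNReal) : ℝ) := by rw [hq]
      _ = ‖(T n) ^ 2 + 1‖ := (hnorm _).symm
      _ ≤ r ^ (n + 1) := hbound n
      _ = r * r ^ n := by rw [pow_succ, mul_comm]
  have hcauchy : CauchySeq T := cauchySeq_of_le_geometric r r hr1 hdist
  obtain ⟨t, ht⟩ := cauchySeq_tendsto_of_complete hcauchy
  refine ⟨t, ?_⟩
  have hmul : Filter.Tendsto (fun n => (T n) ^ 2 + 1) Filter.atTop (nhds (t ^ 2 + 1)) := by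
    exact ((ht.pow 2).add tendsto_const_nhds)
  have hzero : Filter.Tendsto (fun n => (T n) ^ 2 + 1) Filter.atTop (nhds 0) := by
    apply squeeze_zero_norm hbound
    have := (tendsto_pow_atTop_nhds_zero_of_lt_one hr0 hr1).const_mul r
    simp only [mul_zero] at this
    have heqfun : (fun n : ℕ => r * r ^ n) = fun n : ℕ => r ^ (n + 1) := by
      funext n; rw [pow_succ, mul_comm]
    rwa [heqfun] at this
  have := tendsto_nhds_unique hmul hzero
  linear_combination this

theorem stmt_12 {S : Type*} [Field S] [Algebra ℚ_[3] S] [FiniteDimensional ℚ_[3] S]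
    (v : Valuation S (WithZero (Multiplicative ℤ)))
    (hsurj : Function.Surjective v) (h3 : v (3 : S) < 1)
    (hneg : ¬∃ s : S, s ^ 2 = (-1 : S))
    (x y z w : S)
    (hx : v x ≤ 1) (hy : v y ≤ 1) (hz : v z ≤ 1) (hw : v w ≤ 1)
    (hmin : max (max (v x) (v y)) (max (v z) (v w)) = 1)
    (heq : w ^ 2 = -6 * x ^ 4 - 3 * y ^ 4 + 2 * z ^ 4) :
    v z < 1 ∧ v w < 1 := by
  have hv2 : v (2 : S) = 1 := aux12_val_two v h3
  have hzlt : v z < 1 := by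
    by_contra hz1
    have hzeq : v z = 1 := le_antisymm hz (le_of_not_gt hz1)
    have hz0 : z ≠ 0 := by
      intro h; rw [h, map_zero] at hzeq; exact zero_ne_one hzeq
    set s := w / z ^ 2 with hsdef
    have hs : v s ≤ 1 := by
      rw [hsdef, map_div₀, map_pow, hzeq, one_pow, div_one]; exact hw
    have hnum : w ^ 2 + z ^ 4 = 3 * (z ^ 4 - 2 * x ^ 4 - y ^ 4) := by linear_combination heq
    have hint : v (z ^ 4 - 2 * x ^ 4 - y ^ 4) ≤ 1 := by
      have e1 : v (z ^ 4) ≤ 1 := by rw [map_pow]; exact pow_le_one' hz 4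
      have e2 : v (2 * x ^ 4) ≤ 1 := by
        rw [map_mul, hv2, one_mul, map_pow]; exact pow_le_one' hx 4
      have e3 : v (y ^ 4) ≤ 1 := by rw [map_pow]; exact pow_le_one' hy 4
      calc v (z ^ 4 - 2 * x ^ 4 - y ^ 4)
          ≤ max (v (z ^ 4 - 2 * x ^ 4)) (v (y ^ 4)) := v.map_sub _ _
        _ ≤ max (max (v (z ^ 4)) (v (2 * x ^ 4))) (v (y ^ 4)) :=
            max_le_max (v.map_sub _ _) le_rfl
        _ ≤ 1 := by
            apply max_le (max_le e1 e2) e3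
    have hval : v (s ^ 2 + 1) < 1 := by
      have hseq : s ^ 2 + 1 = (w ^ 2 + z ^ 4) / z ^ 4 := by
        rw [hsdef]
        field_simp
      rw [hseq, hnum, map_div₀, map_mul, map_pow, hzeq, one_pow, div_one]
      calc v (3 : S) * v (z ^ 4 - 2 * x ^ 4 - y ^ 4) ≤ v (3 : S) * 1 :=
            mul_le_mul_right hint _
        _ = v (3 : S) := mul_one _
        _ < 1 := h3
    obtain ⟨t, htt⟩ := aux12_key v h3 s hs hval
    exact hneg ⟨t, htt⟩
  refine ⟨hzlt, ?_⟩
  have hw2 : v (w ^ 2) < 1 := by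
    have hweq : w ^ 2 = 3 * (-2 * x ^ 4 - y ^ 4) + 2 * z ^ 4 := by linear_combination heq
    have hint : v (-2 * x ^ 4 - y ^ 4) ≤ 1 := by
      have e2 : v (-2 * x ^ 4) ≤ 1 := by
        have : v ((-2 : S) * x ^ 4) = v (2 * x ^ 4) := by
          rw [show (-2 : S) * x ^ 4 = -(2 * x ^ 4) by ring, Valuation.map_neg]
        rw [this, map_mul, hv2, one_mul, map_pow]; exact pow_le_one' hx 4
      have e3 : v (y ^ 4) ≤ 1 := by rw [map_pow]; exact pow_le_one' hy 4
      calc v (-2 * x ^ 4 - y ^ 4) ≤ max (v (-2 * x ^ 4)) (v (y ^ 4)) := v.map_sub _ _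
        _ ≤ 1 := max_le e2 e3
    rw [hweq]
    apply lt_of_le_of_lt (v.map_add _ _)
    apply max_lt
    · calc v (3 * (-2 * x ^ 4 - y ^ 4)) = v (3 : S) * v (-2 * x ^ 4 - y ^ 4) := map_mul _ _ _
        _ ≤ v (3 : S) * 1 := mul_le_mul_right hint _
        _ = v (3 : S) := mul_one _
        _ < 1 := h3
    · calc v (2 * z ^ 4) = v (z ^ 4) := by rw [map_mul, hv2, one_mul]
        _ = (v z) ^ 4 := map_pow _ _ _
        _ = v z * (v z) ^ 3 := pow_succ' (v z) 3
        _ ≤ v z * 1 := mul_le_mul_right (pow_le_one' hz 3) _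
        _ = v z := mul_one _
        _ < 1 := hzlt
  by_contra hw1
  have hwge : (1 : WithZero (Multiplicative ℤ)) ≤ v w := le_of_not_gt hw1
  have : (1 : WithZero (Multiplicative ℤ)) ≤ v (w ^ 2) := by
    rw [map_pow]
    calc (1 : WithZero (Multiplicative ℤ)) = 1 * 1 := (one_mul 1).symm
      _ ≤ v w * v w := mul_le_mul' hwge hwge
      _ = (v w) ^ 2 := (sq (v w)).symm
  exact absurd hw2 (not_lt.mpr this)
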